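/- For a graph Γ on a set X, the following are equivalent: (1) Γ is Noetherian (contains no variation of the half graph or the three-quarter graph as a vertex-induced subgraph); (2) the Γ-topology, the smallest topology on X in which every set Γ(x) = {y : y = x ∨ y Γ x} is closed, is a Noetherian topology. -/

import Mathlib

def VariationEmbedding {X : Type*} (Γ : X → X → Prop) (cross : ℕ → ℕ → Prop) : Prop :=
  ∃ (x y : ℕ → X) (b₀ b₁ : Bool),
    Function.Injective x ∧ Function.Injective y ∧ (∀ n m, x n ≠ y m) ∧
    (∀ n m, n ≠ m → (Γ (x n) (x m) ↔ b₀ = true)) ∧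
    (∀ n m, n ≠ m → (Γ (y n) (y m) ↔ b₁ = true)) ∧
    (∀ n m, Γ (x n) (y m) ↔ cross n m)

def GraphNoetherian {X : Type*} (Γ : X → X → Prop) : Prop :=
  ¬ VariationEmbedding Γ (fun n m => m < n) ∧ ¬ VariationEmbedding Γ (fun n m => m ≠ n)

def nbhd {X : Type*} (Γ : X → X → Prop) (x : X) : Set X := {y | y = x ∨ Γ x y}

/-- The `Γ`-topology: the smallest topology in which every set `Γ(x)` is closed. -/
def graphTopology {X : Type*} (Γ : X → X → Prop) : TopologicalSpace X :=
  TopologicalSpace.generateFrom {s | ∃ x : X, s = (nbhd Γ x)ᶜ}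

lemma nbhd_isClosed {X : Type*} (Γ : X → X → Prop) (x : X) :
    @IsClosed X (graphTopology Γ) (nbhd Γ x) := by
  letI := graphTopology Γ
  have h : IsOpen (nbhd Γ x)ᶜ :=
    TopologicalSpace.isOpen_generateFrom_of_mem ⟨x, rfl⟩
  simpa using h.isClosed_compl

lemma chain_of_embedding {X : Type*} (Γ : X → X → Prop) (hsym : Symmetric Γ)
    (cross : ℕ → ℕ → Prop)
    (hcross : ∀ n k, k ≤ n → cross (n+1) k) (hdiag : ∀ n, ¬ cross (n+1) (n+1))
    (h : VariationEmbedding Γ cross) :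
    ∃ f : ℕ → Set X, (∀ n, @IsClosed X (graphTopology Γ) (f n)) ∧ ∀ n, f (n + 1) ⊂ f n := by
  letI := graphTopology Γ
  obtain ⟨x, y, b₀, b₁, hxinj, hyinj, hxy, hx, hy, hc⟩ := h
  refine ⟨fun n => ⋂ k ∈ Finset.range (n+1), nbhd Γ (y k), fun n => ?_, fun n => ?_⟩
  · exact isClosed_biInter (fun k _ => nbhd_isClosed Γ (y k))
  · rw [Set.ssubset_def]
    constructor
    · intro z hz
      simp only [Set.mem_iInter, Finset.mem_range] at *
      intro k hk
      exact hz k (by omega)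
    · intro hcon
      have hxmem : x (n+1) ∈ ⋂ k ∈ Finset.range (n+1), nbhd Γ (y k) := by
        simp only [Set.mem_iInter, Finset.mem_range]
        intro k hk
        exact Or.inr (hsym ((hc (n+1) k).mpr (hcross n k (by omega))))
      have := hcon hxmem
      simp only [Set.mem_iInter, Finset.mem_range] at this
      have h2 := this (n+1) (by omega)
      rcases h2 with h2 | h2
      · exact hxy (n+1) (n+1) h2
      · exact hdiag n ((hc (n+1) (n+1)).mp (hsym h2))

lemma pigeon {X : Type*} (F : Finset X) (g : ℕ → X) (S : Set ℕ) (hS : S.Infinite)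
    (hg : ∀ m ∈ S, g m ∈ F) : ∃ x ∈ F, {m | m ∈ S ∧ g m = x}.Infinite := by
  by_contra h
  push_neg at h
  have hfin : (⋃ x ∈ (F : Set X), {m | m ∈ S ∧ g m = x}).Finite :=
    F.finite_toSet.biUnion (fun x hx => h x hx)
  exact hS (hfin.subset fun m hm => Set.mem_biUnion (hg m hm) ⟨hm, rfl⟩)

lemma diagonal {X : Type*} (F : ℕ → Finset X) (g : ℕ → ℕ → X)
    (hg : ∀ n m, n < m → g n m ∈ F n) :
    ∃ (φ : ℕ → ℕ) (c : ℕ → X), StrictMono φ ∧ (∀ i, c i ∈ F (φ i)) ∧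
      ∀ i j, i < j → g (φ i) (φ j) = c i := by
  classical
  have step : ∀ (n : ℕ) (S : Set ℕ), S.Infinite →
      ∃ (x : X) (S' : Set ℕ), S'.Infinite ∧ S' ⊆ S ∧ x ∈ F n ∧
        ∀ m ∈ S', n < m ∧ g n m = x := by
    intro n S hS
    have hS' : {m | m ∈ S ∧ n < m}.Infinite := by
      refine (hS.diff (Set.finite_Iic n)).mono ?_
      intro m hm
      exact ⟨hm.1, lt_of_not_ge hm.2⟩
    obtain ⟨x, hx, hinf⟩ := pigeon (F n) (g n) {m | m ∈ S ∧ n < m} hS'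
      (fun m hm => hg n m hm.2)
    exact ⟨x, _, hinf, fun m hm => hm.1.1, hx, fun m hm => ⟨hm.1.2, hm.2⟩⟩
  let Q : ℕ × X × Set ℕ → Prop := fun p =>
    p.2.2.Infinite ∧ p.2.1 ∈ F p.1 ∧ ∀ m ∈ p.2.2, p.1 < m ∧ g p.1 m = p.2.1
  have hnext : ∀ p, Q p → ∃ q, Q q ∧ q.1 ∈ p.2.2 ∧ q.2.2 ⊆ p.2.2 := by
    rintro ⟨n, x, S⟩ ⟨hinf, hxF, hprop⟩
    obtain ⟨n', hn'⟩ := hinf.nonempty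
    obtain ⟨x', S', h1, h2, h3, h4⟩ := step n' S hinf
    exact ⟨(n', x', S'), ⟨h1, h3, h4⟩, hn', h2⟩
  have hbase : ∃ p, Q p := by
    obtain ⟨x, S, h1, _, h3, h4⟩ := step 0 Set.univ Set.infinite_univ
    exact ⟨(0, x, S), h1, h3, h4⟩
  let seq : ℕ → {p // Q p} := fun k =>
    Nat.rec ⟨hbase.choose, hbase.choose_spec⟩
      (fun _ ih => ⟨(hnext ih.1 ih.2).choose, ((hnext ih.1 ih.2).choose_spec).1⟩) k
  have hlink : ∀ k, (seq (k+1)).1.1 ∈ (seq k).1.2.2 ∧ (seq (k+1)).1.2.2 ⊆ (seq k).1.2.2 :=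
    fun k => ⟨((hnext (seq k).1 (seq k).2).choose_spec).2.1,
      ((hnext (seq k).1 (seq k).2).choose_spec).2.2⟩
  have hmono : ∀ i j, i ≤ j → (seq j).1.2.2 ⊆ (seq i).1.2.2 := by
    intro i j hij
    induction j with
    | zero => simp_all
    | succ j ih =>
      rcases Nat.lt_or_ge i (j+1) with h | h
      · exact ((hlink j).2).trans (ih (Nat.lt_succ_iff.mp h))
      · have : i = j + 1 := le_antisymm hij h
        subst this; exact fun _ h => h
  have hmem : ∀ i j, i < j → (seq j).1.1 ∈ (seq i).1.2.2 := by
    intro i j hij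
    obtain ⟨j, rfl⟩ := Nat.exists_eq_add_of_lt hij
    exact hmono i (i + j) (Nat.le_add_right _ _) (hlink (i + j)).1
  refine ⟨fun k => (seq k).1.1, fun k => (seq k).1.2.1, ?_, fun i => (seq i).2.2.1, ?_⟩
  · intro i j hij
    exact ((seq i).2.2.2 _ (hmem i j hij)).1
  · intro i j hij
    exact ((seq i).2.2.2 _ (hmem i j hij)).2

lemma ramsey_pairs {β : Type*} [Fintype β] [DecidableEq β] (k : ℕ → ℕ → β) :
    ∃ (φ : ℕ → ℕ) (b : β), StrictMono φ ∧ ∀ i j, i < j → k (φ i) (φ j) = b := by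
  obtain ⟨ψ, c, hψ, _, hc⟩ := diagonal (fun _ => (Finset.univ : Finset β)) k
    (fun _ _ _ => Finset.mem_univ _)
  obtain ⟨b, _, hbinf⟩ := pigeon Finset.univ c Set.univ Set.infinite_univ
    (fun _ _ => Finset.mem_univ _)
  have hinf : {i | c i = b}.Infinite := by simpa using hbinf
  refine ⟨ψ ∘ Nat.nth (fun i => c i = b), b, hψ.comp (Nat.nth_strictMono hinf), ?_⟩
  intro i j hij
  have h1 := hc (Nat.nth (fun i => c i = b) i) (Nat.nth (fun i => c i = b) j)
    (Nat.nth_strictMono hinf hij)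
  simp only [Function.comp]
  rw [h1]
  exact Nat.nth_mem_of_infinite hinf i
lemma key_lemma {X : Type*} (Γ : X → X → Prop) (s : Set X)
    (hs : @IsClosed X (graphTopology Γ) s) (a : X) (ha : a ∉ s) :
    ∃ F : Finset X, (∀ x ∈ F, a ∉ nbhd Γ x) ∧ s ⊆ ⋃ x ∈ F, nbhd Γ x := by
  classical
  letI := graphTopology Γ
  have hb := TopologicalSpace.isTopologicalBasis_of_subbasis
    (s := {t : Set X | ∃ x : X, t = (nbhd Γ x)ᶜ}) rfl
  obtain ⟨v, hv, hav, hvs⟩ := hb.exists_subset_of_mem_open (show a ∈ sᶜ from ha) hs.isOpen_compl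
  obtain ⟨fs, ⟨hfin, hsub⟩, rfl⟩ := hv
  have hch : ∀ t ∈ fs, ∃ x : X, t = (nbhd Γ x)ᶜ := fun t ht => hsub ht
  haveI : Nonempty X := ⟨a⟩
  choose! χ hχ using hch
  refine ⟨hfin.toFinset.image χ, ?_, ?_⟩
  · intro x hx hax
    simp only [Finset.mem_image, Set.Finite.mem_toFinset] at hx
    obtain ⟨t, ht, rfl⟩ := hx
    have hmem : a ∈ t := Set.mem_sInter.mp hav t ht
    rw [hχ t ht] at hmem
    exact hmem hax
  · intro z hz
    have hzv : z ∉ ⋂₀ fs := fun hzv => hvs hzv hz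
    obtain ⟨t, ht, hzt⟩ : ∃ t ∈ fs, z ∉ t := by
      by_contra hcon
      push_neg at hcon
      exact hzv (Set.mem_sInter.mpr hcon)
    have hzn : z ∈ nbhd Γ (χ t) := by
      rw [hχ t ht] at hzt
      simpa using hzt
    exact Set.mem_iUnion₂.mpr
      ⟨χ t, Finset.mem_image_of_mem χ (hfin.mem_toFinset.mpr ht), hzn⟩

lemma embedding_of_chain {X : Type*} (Γ : X → X → Prop) (hsym : Symmetric Γ)
    (f : ℕ → Set X) (hcl : ∀ n, @IsClosed X (graphTopology Γ) (f n))
    (hch : ∀ n, f (n + 1) ⊂ f n) :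
    VariationEmbedding Γ (fun n m => m < n) ∨ VariationEmbedding Γ (fun n m => m ≠ n) := by
  classical
  have hmono : ∀ i j, i ≤ j → f j ⊆ f i :=
    fun i j h => antitone_nat_of_succ_le (fun n => (hch n).subset) h
  have ha : ∀ n, ∃ z, z ∈ f n ∧ z ∉ f (n+1) := fun n => Set.exists_of_ssubset (hch n)
  choose a haf hanf using ha
  have hainj : ∀ i j, i < j → a i ≠ a j := by
    intro i j hij hEq
    exact hanf i (hmono (i+1) j hij (hEq ▸ haf j))
  have hF : ∀ n, ∃ F : Finset X, (∀ x ∈ F, a n ∉ nbhd Γ x) ∧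
      f (n+1) ⊆ ⋃ x ∈ F, nbhd Γ x := fun n => key_lemma Γ (f (n+1)) (hcl (n+1)) (a n) (hanf n)
  choose F hFa hFs using hF
  have hgex : ∀ n m, ∃ x, n < m → (x ∈ F n ∧ a m ∈ nbhd Γ x) := by
    intro n m
    by_cases h : n < m
    · have hm : a m ∈ ⋃ x ∈ F n, nbhd Γ x := hFs n (hmono (n+1) m h (haf m))
      obtain ⟨x, hx1, hx2⟩ := Set.mem_iUnion₂.mp hm
      exact ⟨x, fun _ => ⟨hx1, hx2⟩⟩
    · exact ⟨a 0, fun h' => absurd h' h⟩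
  choose g hg using hgex
  obtain ⟨φ, c, hφ, hcF, hgc⟩ := diagonal F g (fun n m h => (hg n m h).1)
  set A : ℕ → X := fun i => a (φ i) with hA
  set C : ℕ → X := c with hC
  have hAC1 : ∀ i j, i < j → A j ∈ nbhd Γ (C i) := by
    intro i j h
    have h2 := (hg (φ i) (φ j) (hφ h)).2
    rwa [hgc i j h] at h2
  have hAC2 : ∀ i, A i ∉ nbhd Γ (C i) := fun i => hFa (φ i) (C i) (hcF i)
  have hAinj : ∀ i j, i < j → A i ≠ A j := fun i j h => hainj _ _ (hφ h)
  obtain ⟨ψ, ⟨b1, b2, b3, b4, b5, b6⟩, hψ, hb⟩ := ramsey_pairs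
    (fun n m => (decide (Γ (A n) (A m)), decide (Γ (C n) (C m)), decide (Γ (A n) (C m)),
      decide (A m = C n), decide (A n = C m), decide (C n = C m)))
  simp only [Prod.mk.injEq] at hb
  set x : ℕ → X := fun i => A (ψ i) with hx
  set y : ℕ → X := fun i => C (ψ i) with hy
  have e1 : ∀ i j, i < j → (Γ (x i) (x j) ↔ b1 = true) := by
    intro i j h; rw [← (hb i j h).1]; simp; exact Iff.rfl
  have e2 : ∀ i j, i < j → (Γ (y i) (y j) ↔ b2 = true) := by
    intro i j h; rw [← (hb i j h).2.1]; simp; exact Iff.rfl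
  have e3 : ∀ i j, i < j → (Γ (x i) (y j) ↔ b3 = true) := by
    intro i j h; rw [← (hb i j h).2.2.1]; simp; exact Iff.rfl
  have e4 : ∀ i j, i < j → ((x j = y i) ↔ b4 = true) := by
    intro i j h; rw [← (hb i j h).2.2.2.1]; simp; exact Iff.rfl
  have e5 : ∀ i j, i < j → ((x i = y j) ↔ b5 = true) := by
    intro i j h; rw [← (hb i j h).2.2.2.2.1]; simp; exact Iff.rfl
  have e6 : ∀ i j, i < j → ((y i = y j) ↔ b6 = true) := by
    intro i j h; rw [← (hb i j h).2.2.2.2.2]; simp; exact Iff.rfl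
  have hxinj' : ∀ i j, i < j → x i ≠ x j := fun i j h => hAinj _ _ (hψ h)
  -- x j ≠ y i for i < j
  have hne1 : ∀ i j, i < j → x j ≠ y i := by
    intro i j hij hEq
    have hb4 : b4 = true := (e4 i j hij).mp hEq
    have q1 : x 1 = y 0 := (e4 0 1 one_pos).mpr hb4
    have q2 : x 2 = y 0 := (e4 0 2 two_pos).mpr hb4
    exact hxinj' 1 2 one_lt_two (q1.trans q2.symm)
  have hΓyx : ∀ i j, i < j → Γ (y i) (x j) := by
    intro i j hij
    have h2 := hAC1 (ψ i) (ψ j) (hψ hij)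
    rcases h2 with h2 | h2
    · exact absurd h2 (hne1 i j hij)
    · exact h2
  have hyne : ∀ i j, i < j → y i ≠ y j := by
    intro i j hij hEq
    have hb6 : b6 = true := (e6 i j hij).mp hEq
    have q1 : y 0 = y 1 := (e6 0 1 one_pos).mpr hb6
    have q2 : Γ (y 0) (x 1) := hΓyx 0 1 one_pos
    rw [q1] at q2
    exact hAC2 (ψ 1) (Or.inr q2)
  have hne2 : ∀ i j, i < j → x i ≠ y j := by
    intro i j hij hEq
    have hb5 : b5 = true := (e5 i j hij).mp hEq
    have q1 : x 0 = y 1 := (e5 0 1 one_pos).mpr hb5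
    have q2 : x 0 = y 2 := (e5 0 2 two_pos).mpr hb5
    exact hyne 1 2 one_lt_two (q1.symm.trans q2)
  have hne0 : ∀ i, x i ≠ y i := fun i hEq => hAC2 (ψ i) (Or.inl hEq)
  have hxyne : ∀ n m, x n ≠ y m := by
    intro n m
    rcases lt_trichotomy n m with h | rfl | h
    · exact hne2 n m h
    · exact hne0 n
    · exact hne1 m n h
  have hxinj : Function.Injective x := by
    intro i j hEq
    rcases lt_trichotomy i j with h | h | h
    · exact absurd hEq (hxinj' i j h)
    · exact h
    · exact absurd hEq.symm (hxinj' j i h)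
  have hyinj : Function.Injective y := by
    intro i j hEq
    rcases lt_trichotomy i j with h | h | h
    · exact absurd hEq (hyne i j h)
    · exact h
    · exact absurd hEq.symm (hyne j i h)
  have hcol1 : ∀ n m, n ≠ m → (Γ (x n) (x m) ↔ b1 = true) := by
    intro n m hnm
    rcases lt_trichotomy n m with h | h | h
    · exact e1 n m h
    · exact absurd h hnm
    · exact ⟨fun hg => (e1 m n h).mp (hsym hg), fun hb => hsym ((e1 m n h).mpr hb)⟩
  have hcol2 : ∀ n m, n ≠ m → (Γ (y n) (y m) ↔ b2 = true) := by
    intro n m hnm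
    rcases lt_trichotomy n m with h | h | h
    · exact e2 n m h
    · exact absurd h hnm
    · exact ⟨fun hg => (e2 m n h).mp (hsym hg), fun hb => hsym ((e2 m n h).mpr hb)⟩
  have hΓxy_gt : ∀ n m, m < n → Γ (x n) (y m) := fun n m h => hsym (hΓyx m n h)
  have hΓxy_eq : ∀ n, ¬ Γ (x n) (y n) := fun n h => hAC2 (ψ n) (Or.inr (hsym h))
  cases hb3 : b3 with
  | false =>
    left
    refine ⟨x, y, b1, b2, hxinj, hyinj, hxyne, hcol1, hcol2, ?_⟩
    intro n m
    rcases lt_trichotomy m n with h | rfl | h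
    · simp only [h, iff_true]; exact hΓxy_gt n m h
    · simp only [lt_irrefl, iff_false]; exact hΓxy_eq m
    · constructor
      · intro hg
        have := (e3 n m h).mp hg
        rw [hb3] at this; exact absurd this (by simp)
      · intro hc; omega
  | true =>
    right
    refine ⟨x, y, b1, b2, hxinj, hyinj, hxyne, hcol1, hcol2, ?_⟩
    intro n m
    rcases lt_trichotomy m n with h | rfl | h
    · constructor
      · intro _; omega
      · intro _; exact hΓxy_gt n m h
    · simp only [ne_eq, not_true_eq_false, iff_false]
      exact hΓxy_eq m
    · constructor
      · intro _; omega
      · intro _; exact (e3 n m h).mpr hb3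

theorem noetherian_iff_graph_topology_noetherian
    {X : Type*} (Γ : X → X → Prop) (hsym : Symmetric Γ) :
    GraphNoetherian Γ ↔
      ¬ ∃ f : ℕ → Set X, (∀ n, @IsClosed X (graphTopology Γ) (f n)) ∧
        ∀ n, f (n + 1) ⊂ f n := by
  constructor
  · intro hG hex
    obtain ⟨f, hcl, hch⟩ := hex
    rcases embedding_of_chain Γ hsym f hcl hch with h | h
    · exact hG.1 h
    · exact hG.2 h
  · intro h
    constructor
    · intro hemb
      exact h (chain_of_embedding Γ hsym (fun n m => m < n)
        (fun n k hk => Nat.lt_succ_of_le hk) (fun n => Nat.lt_irrefl _) hemb)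
    · intro hemb
      exact h (chain_of_embedding Γ hsym (fun n m => m ≠ n)
        (fun n k hk => Nat.ne_of_lt (Nat.lt_succ_of_le hk)) (fun n hne => hne rfl) hemb)
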